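/- Let k ≥ 2 be an integer, let d satisfy (1/2)(1 − 1/k) < d < 1/2, and let t > 0. Then ∫_{ℝ^k} |e^{i(u₁ + … + u_k)t} − 1|² / |u₁ + … + u_k|² · |u₁|^{−2d} ⋯ |u_k|^{−2d} du₁ … du_k < ∞. -/

import Mathlib

open MeasureTheory Filter Set
open scoped ENNReal

noncomputable def wfun (a : ℝ) (u : ℝ) : ℝ≥0∞ := ENNReal.ofReal (|u| ^ (-a))

lemma wfun_meas (a : ℝ) : Measurable (wfun a) :=
  (measurable_abs.pow_const _).ennreal_ofReal

lemma wfun_neg (a u : ℝ) : wfun a (-u) = wfun a u := by simp [wfun]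

/-- composition with neg preserves lintegral -/
lemma lint_comp_neg (f : ℝ → ℝ≥0∞) : ∫⁻ x : ℝ, f (-x) = ∫⁻ x, f x :=
  (Measure.measurePreserving_neg (volume : Measure ℝ)).lintegral_comp_emb
    (MeasurableEquiv.neg ℝ).measurableEmbedding f

lemma lint_comp_sub (f : ℝ → ℝ≥0∞) (c : ℝ) : ∫⁻ x : ℝ, f (c - x) = ∫⁻ x, f x := by
  have h1 : ∫⁻ x : ℝ, (fun y => f (c + y)) (-x) = ∫⁻ x, f (c + x) :=
    lint_comp_neg (fun y => f (c + y))
  simp only [sub_eq_add_neg]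
  rw [h1, lintegral_add_left_eq_self f c]

lemma lint_ball (a r : ℝ) (ha : a < 1) (hr : 0 < r) :
    ∫⁻ s in {s : ℝ | |s| ≤ r}, wfun a s < ⊤ := by
  have hpos : ∫⁻ s in Ioo (0:ℝ) r, wfun a s < ⊤ := by
    have h1 : IntegrableOn (fun x : ℝ => x ^ (-a)) (Ioo 0 r) :=
      (intervalIntegral.integrableOn_Ioo_rpow_iff hr).2 (by linarith)
    have h2 : ∫⁻ s in Ioo (0:ℝ) r, wfun a s
        = ∫⁻ s in Ioo (0:ℝ) r, ENNReal.ofReal (s ^ (-a)) :=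
      setLIntegral_congr_fun measurableSet_Ioo
        (fun s hs => by rw [wfun, abs_of_pos hs.1])
    rw [h2]
    exact h1.lintegral_lt_top
  have key : ∫⁻ s in Ioo (-r) (0:ℝ) ∪ Ioo 0 r, wfun a s < ⊤ := by
    rw [lintegral_union measurableSet_Ioo (by
      apply Set.disjoint_left.2; rintro x ⟨_, h1⟩ ⟨h2, _⟩; linarith)]
    have hneg : ∫⁻ s in Ioo (-r) (0:ℝ), wfun a s = ∫⁻ s in Ioo (0:ℝ) r, wfun a s := by
      have : ∫⁻ x : ℝ, ((Ioo (-r) (0:ℝ)).indicator (wfun a)) (-x)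
          = ∫⁻ x, (Ioo (-r) (0:ℝ)).indicator (wfun a) x := lint_comp_neg _
      rw [← lintegral_indicator measurableSet_Ioo, ← lintegral_indicator measurableSet_Ioo,
        ← this]
      congr 1; funext x
      by_cases hx : x ∈ Ioo (0:ℝ) r
      · have hx' : -x ∈ Ioo (-r) (0:ℝ) := ⟨by linarith [hx.2], by linarith [hx.1]⟩
        rw [Set.indicator_of_mem hx', Set.indicator_of_mem hx, wfun_neg]
      · have hx' : -x ∉ Ioo (-r) (0:ℝ) := by
          intro h; exact hx ⟨by linarith [h.2], by linarith [h.1]⟩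
        rw [Set.indicator_of_notMem hx', Set.indicator_of_notMem hx]
    rw [hneg]
    exact ENNReal.add_lt_top.2 ⟨hpos, hpos⟩
  have hsub : ∫⁻ s in {s : ℝ | |s| ≤ r}, wfun a s
      ≤ ∫⁻ s in Ioo (-r) (0:ℝ) ∪ Ioo 0 r ∪ {(-r), 0, r}, wfun a s := by
    apply lintegral_mono_set
    intro x hx
    simp only [mem_setOf_eq, abs_le] at hx
    rcases lt_trichotomy x 0 with h | h | h
    · rcases eq_or_lt_of_le hx.1 with h' | h'
      · exact Or.inr (by simp [← h'])
      · exact Or.inl (Or.inl ⟨h', h⟩)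
    · exact Or.inr (by simp [h])
    · rcases eq_or_lt_of_le hx.2 with h' | h'
      · exact Or.inr (by simp [h'])
      · exact Or.inl (Or.inr ⟨h, h'⟩)
  refine lt_of_le_of_lt (hsub.trans (lintegral_union_le _ _ _)) ?_
  have hnull : ∫⁻ s in ({(-r), 0, r} : Set ℝ), wfun a s = 0 := by
    rw [setLIntegral_measure_zero]
    have : (({(-r), 0, r} : Set ℝ)).Countable := by
      apply Set.Countable.insert; apply Set.Countable.insert; exact Set.countable_singleton _
    exact this.measure_zero _
  rw [hnull]
  simpa using key

lemma lint_tail (a r : ℝ) (ha : 1 < a) (hr : 0 < r) :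
    ∫⁻ s in {s : ℝ | r ≤ |s|}, wfun a s < ⊤ := by
  have hpos : ∫⁻ s in Ici r, wfun a s < ⊤ := by
    have h1 : IntegrableOn (fun x : ℝ => x ^ (-a)) (Ioi r) :=
      integrableOn_Ioi_rpow_of_lt (by linarith) hr
    have h2 : ∫⁻ s in Ioi r, wfun a s = ∫⁻ s in Ioi r, ENNReal.ofReal (s ^ (-a)) :=
      setLIntegral_congr_fun measurableSet_Ioi
        (fun s hs => by rw [wfun, abs_of_pos (hr.trans hs)])
    have h3 : ∫⁻ s in Ici r, wfun a s = ∫⁻ s in Ioi r, wfun a s :=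
      setLIntegral_congr (Ioi_ae_eq_Ici (μ := volume) (a := r)).symm
    rw [h3, h2]
    exact h1.lintegral_lt_top
  have hneg : ∫⁻ s in Iic (-r), wfun a s = ∫⁻ s in Ici r, wfun a s := by
    have : ∫⁻ x : ℝ, ((Iic (-r)).indicator (wfun a)) (-x)
        = ∫⁻ x, (Iic (-r)).indicator (wfun a) x := lint_comp_neg _
    rw [← lintegral_indicator measurableSet_Iic, ← lintegral_indicator measurableSet_Ici,
      ← this]
    congr 1; funext x
    by_cases hx : x ∈ Ici r
    · have hx' : -x ∈ Iic (-r) := by simpa using hx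
      rw [Set.indicator_of_mem hx', Set.indicator_of_mem hx, wfun_neg]
    · have hx' : -x ∉ Iic (-r) := by simpa using hx
      rw [Set.indicator_of_notMem hx', Set.indicator_of_notMem hx]
  have hsub : ∫⁻ s in {s : ℝ | r ≤ |s|}, wfun a s
      ≤ ∫⁻ s in Iic (-r) ∪ Ici r, wfun a s := by
    apply lintegral_mono_set
    intro x hx
    simp only [mem_setOf_eq, le_abs] at hx
    rcases hx with h | h
    · exact Or.inr h
    · exact Or.inl (by simp only [mem_Iic]; linarith)
  refine lt_of_le_of_lt (hsub.trans (lintegral_union_le _ _ _)) ?_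
  rw [hneg]
  exact ENNReal.add_lt_top.2 ⟨hpos, hpos⟩

lemma wfun_le (a x c : ℝ) (hc : 0 < c) (hcx : c ≤ |x|) (ha : 0 ≤ a) :
    wfun a x ≤ ENNReal.ofReal (c ^ (-a)) :=
  ENNReal.ofReal_le_ofReal (Real.rpow_le_rpow_of_nonpos hc hcx (by linarith))

lemma conv_finite (a b : ℝ) (ha0 : 0 < a) (ha1 : a < 1) (hb0 : 0 < b) (hb1 : b < 1)
    (hab : 1 < a + b) :
    ∫⁻ v : ℝ, wfun a v * wfun b (1 - v) < ⊤ := by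
  set A : Set ℝ := {v | |v| ≤ 2⁻¹} with hA
  set B : Set ℝ := {v | |v - 1| ≤ 2⁻¹} with hB
  set C : Set ℝ := {v : ℝ | |v| ≤ 2 ∧ 2⁻¹ ≤ |v| ∧ 2⁻¹ ≤ |v - 1|} with hC
  set D : Set ℝ := {v | 2 ≤ |v|} with hD
  have hmeasA : MeasurableSet A := measurable_abs measurableSet_Iic
  have hmeasB : MeasurableSet B :=
    (measurable_abs.comp (measurable_id.sub_const 1)) measurableSet_Iic
  have cover : (univ : Set ℝ) ⊆ A ∪ B ∪ C ∪ D := by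
    intro v _
    by_cases h1 : |v| ≤ 2⁻¹
    · exact Or.inl (Or.inl (Or.inl h1))
    by_cases h2 : |v - 1| ≤ 2⁻¹
    · exact Or.inl (Or.inl (Or.inr h2))
    by_cases h3 : 2 ≤ |v|
    · exact Or.inr h3
    · exact Or.inl (Or.inr ⟨le_of_not_ge h3, le_of_not_ge h1, le_of_not_ge h2⟩)
  have hstart : ∫⁻ v : ℝ, wfun a v * wfun b (1 - v)
      ≤ (((∫⁻ v in A, wfun a v * wfun b (1 - v))
        + (∫⁻ v in B, wfun a v * wfun b (1 - v)))
        + (∫⁻ v in C, wfun a v * wfun b (1 - v)))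
        + (∫⁻ v in D, wfun a v * wfun b (1 - v)) := by
    calc ∫⁻ v : ℝ, wfun a v * wfun b (1 - v)
        = ∫⁻ v in (univ : Set ℝ), wfun a v * wfun b (1 - v) := by
          rw [Measure.restrict_univ]
      _ ≤ ∫⁻ v in A ∪ B ∪ C ∪ D, wfun a v * wfun b (1 - v) := lintegral_mono_set cover
      _ ≤ (∫⁻ v in A ∪ B ∪ C, wfun a v * wfun b (1 - v))
            + (∫⁻ v in D, wfun a v * wfun b (1 - v)) := lintegral_union_le _ _ _
      _ ≤ ((∫⁻ v in A ∪ B, wfun a v * wfun b (1 - v))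
            + (∫⁻ v in C, wfun a v * wfun b (1 - v)))
            + (∫⁻ v in D, wfun a v * wfun b (1 - v)) := by
          gcongr ?_ + _; exact lintegral_union_le _ _ _
      _ ≤ (((∫⁻ v in A, wfun a v * wfun b (1 - v)) + (∫⁻ v in B, wfun a v * wfun b (1 - v)))
            + (∫⁻ v in C, wfun a v * wfun b (1 - v)))
            + (∫⁻ v in D, wfun a v * wfun b (1 - v)) := by
          gcongr (?_ + _) + _; exact lintegral_union_le _ _ _
  refine lt_of_le_of_lt hstart ?_
  have half_pos : (0:ℝ) < 2⁻¹ := by norm_num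
  -- A part
  have hAint : ∫⁻ v in A, wfun a v * wfun b (1 - v)
      ≤ (∫⁻ v in A, wfun a v) * ENNReal.ofReal ((2:ℝ)⁻¹ ^ (-b)) := by
    rw [← lintegral_mul_const _ (wfun_meas a)]
    apply setLIntegral_mono_ae ((wfun_meas a).mul_const _).aemeasurable
    refine ae_of_all _ fun v hv => ?_
    have h1v : (2:ℝ)⁻¹ ≤ |1 - v| := by
      have hv' : |v| ≤ 2⁻¹ := hv
      have h := abs_sub_abs_le_abs_sub 1 v
      rw [abs_one] at h; linarith
    exact mul_le_mul_right (wfun_le b (1 - v) 2⁻¹ half_pos h1v hb0.le) _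
  have hAfin : ∫⁻ v in A, wfun a v * wfun b (1 - v) < ⊤ :=
    lt_of_le_of_lt hAint (ENNReal.mul_lt_top (lint_ball a 2⁻¹ ha1 half_pos)
      ENNReal.ofReal_lt_top)
  -- B part
  have hBint : ∫⁻ v in B, wfun a v * wfun b (1 - v)
      ≤ ENNReal.ofReal ((2:ℝ)⁻¹ ^ (-a)) * ∫⁻ v in B, wfun b (1 - v) := by
    have hm : Measurable fun v : ℝ => wfun b (1 - v) :=
      (wfun_meas b).comp (measurable_const.sub measurable_id)
    rw [← lintegral_const_mul _ hm]
    apply setLIntegral_mono_ae (hm.const_mul _).aemeasurable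
    refine ae_of_all _ fun v hv => ?_
    have h1v : (2:ℝ)⁻¹ ≤ |v| := by
      have := hv; simp only [hB, mem_setOf_eq] at this
      have := abs_le.1 this
      rw [le_abs]; rcases le_or_gt (2⁻¹:ℝ) v with h | h
      · exact Or.inl h
      · exfalso; linarith [this.1]
    exact mul_le_mul_left (wfun_le a v 2⁻¹ half_pos h1v ha0.le) _
  have hBtrans : ∫⁻ v in B, wfun b (1 - v) = ∫⁻ u in A, wfun b u := by
    rw [← lintegral_indicator hmeasB, ← lintegral_indicator hmeasA]
    rw [← lint_comp_sub (A.indicator (wfun b)) 1]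
    congr 1; funext v
    by_cases hv : v ∈ B
    · have hv' : 1 - v ∈ A := by
        simp only [hA, mem_setOf_eq]; simp only [hB, mem_setOf_eq] at hv
        rw [show (1:ℝ) - v = -(v - 1) by ring, abs_neg]; exact hv
      rw [Set.indicator_of_mem hv, Set.indicator_of_mem hv']
    · have hv' : 1 - v ∉ A := by
        simp only [hA, mem_setOf_eq]; simp only [hB, mem_setOf_eq] at hv
        rw [show (1:ℝ) - v = -(v - 1) by ring, abs_neg]; exact hv
      rw [Set.indicator_of_notMem hv, Set.indicator_of_notMem hv']
  have hBfin : ∫⁻ v in B, wfun a v * wfun b (1 - v) < ⊤ := by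
    refine lt_of_le_of_lt hBint ?_
    rw [hBtrans]
    exact ENNReal.mul_lt_top ENNReal.ofReal_lt_top (lint_ball b 2⁻¹ hb1 half_pos)
  -- C part
  have hCint : ∫⁻ v in C, wfun a v * wfun b (1 - v)
      ≤ (ENNReal.ofReal ((2:ℝ)⁻¹ ^ (-a)) * ENNReal.ofReal ((2:ℝ)⁻¹ ^ (-b)))
        * volume C := by
    rw [← setLIntegral_const C _]
    apply setLIntegral_mono_ae measurable_const.aemeasurable
    refine ae_of_all _ fun v hv => ?_
    simp only [hC, mem_setOf_eq] at hv
    have e1 := wfun_le a v 2⁻¹ half_pos hv.2.1 ha0.le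
    have e2 : wfun b (1 - v) ≤ ENNReal.ofReal ((2:ℝ)⁻¹ ^ (-b)) := by
      apply wfun_le b (1 - v) 2⁻¹ half_pos _ hb0.le
      rw [show (1:ℝ) - v = -(v - 1) by ring, abs_neg]; exact hv.2.2
    exact mul_le_mul' e1 e2
  have hCfin : ∫⁻ v in C, wfun a v * wfun b (1 - v) < ⊤ := by
    refine lt_of_le_of_lt hCint (ENNReal.mul_lt_top
      (ENNReal.mul_lt_top ENNReal.ofReal_lt_top ENNReal.ofReal_lt_top) ?_)
    refine lt_of_le_of_lt (measure_mono (show C ⊆ Icc (-2:ℝ) 2 from ?_)) ?_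
    · intro v hv; simp only [hC, mem_setOf_eq] at hv; exact abs_le.1 hv.1
    · rw [Real.volume_Icc]; exact ENNReal.ofReal_lt_top
  -- D part
  have hDint : ∫⁻ v in D, wfun a v * wfun b (1 - v)
      ≤ (∫⁻ v in D, wfun (a + b) v) * ENNReal.ofReal ((2:ℝ)⁻¹ ^ (-b)) := by
    rw [← lintegral_mul_const _ (wfun_meas (a + b))]
    apply setLIntegral_mono_ae ((wfun_meas (a + b)).mul_const _).aemeasurable
    refine ae_of_all _ fun v hv => ?_
    simp only [hD, mem_setOf_eq] at hv
    have hv0 : (0:ℝ) < |v| := by linarith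
    have h1 : |v| * 2⁻¹ ≤ |1 - v| := by
      have : |v| - 1 ≤ |1 - v| := by
        have := abs_sub_abs_le_abs_sub v 1
        rw [show |v - 1| = |1 - v| from abs_sub_comm v 1] at this
        simpa using this
      linarith
    have h2 : wfun b (1 - v) ≤ ENNReal.ofReal ((|v| * 2⁻¹) ^ (-b)) :=
      wfun_le b (1 - v) (|v| * 2⁻¹) (by positivity) h1 hb0.le
    calc wfun a v * wfun b (1 - v)
        ≤ wfun a v * ENNReal.ofReal ((|v| * 2⁻¹) ^ (-b)) := mul_le_mul_right h2 _
      _ = wfun (a + b) v * ENNReal.ofReal ((2:ℝ)⁻¹ ^ (-b)) := by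
          rw [wfun, wfun, Real.mul_rpow (abs_nonneg v) (by norm_num),
            ← ENNReal.ofReal_mul (Real.rpow_nonneg (abs_nonneg v) _), ← mul_assoc,
            ← ENNReal.ofReal_mul (by positivity), ← Real.rpow_add hv0]
          ring_nf
  have hDfin : ∫⁻ v in D, wfun a v * wfun b (1 - v) < ⊤ :=
    lt_of_le_of_lt hDint (ENNReal.mul_lt_top (lint_tail (a + b) 2 hab (by norm_num))
      ENNReal.ofReal_lt_top)
  exact ENNReal.add_lt_top.2 ⟨ENNReal.add_lt_top.2 ⟨ENNReal.add_lt_top.2 ⟨hAfin, hBfin⟩,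
    hCfin⟩, hDfin⟩

lemma conv_eval (a b s : ℝ) (hs : s ≠ 0) :
    ∫⁻ u : ℝ, wfun a u * wfun b (s - u)
      = ENNReal.ofReal (|s| ^ (1 - a - b)) * ∫⁻ v : ℝ, wfun a v * wfun b (1 - v) := by
  have hF : Measurable fun u : ℝ => wfun a u * wfun b (s - u) :=
    (wfun_meas a).mul ((wfun_meas b).comp (measurable_const.sub measurable_id))
  have habs : (0:ℝ) < |s| := abs_pos.2 hs
  have hmap : ∫⁻ v : ℝ, wfun a (s * v) * wfun b (s - s * v)
      = ENNReal.ofReal |s⁻¹| * ∫⁻ u : ℝ, wfun a u * wfun b (s - u) := by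
    have := lintegral_map (μ := (volume : Measure ℝ)) hF (measurable_const_mul s)
    rw [Real.map_volume_mul_left hs] at this
    simpa [lintegral_smul_measure] using this.symm
  have hscale : ∀ v : ℝ, wfun a (s * v) * wfun b (s - s * v)
      = (ENNReal.ofReal (|s| ^ (-a)) * ENNReal.ofReal (|s| ^ (-b)))
        * (wfun a v * wfun b (1 - v)) := by
    intro v
    have h1 : wfun a (s * v) = ENNReal.ofReal (|s| ^ (-a)) * wfun a v := by
      rw [wfun, wfun, abs_mul, Real.mul_rpow (abs_nonneg s) (abs_nonneg v),
        ENNReal.ofReal_mul (Real.rpow_nonneg (abs_nonneg s) _)]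
    have h2 : wfun b (s - s * v) = ENNReal.ofReal (|s| ^ (-b)) * wfun b (1 - v) := by
      rw [show s - s * v = s * (1 - v) by ring, wfun, wfun, abs_mul,
        Real.mul_rpow (abs_nonneg s) (abs_nonneg _),
        ENNReal.ofReal_mul (Real.rpow_nonneg (abs_nonneg s) _)]
    rw [h1, h2]; ring
  have h3 : ∫⁻ v : ℝ, wfun a (s * v) * wfun b (s - s * v)
      = (ENNReal.ofReal (|s| ^ (-a)) * ENNReal.ofReal (|s| ^ (-b)))
        * ∫⁻ v : ℝ, wfun a v * wfun b (1 - v) := by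
    simp_rw [hscale]
    exact lintegral_const_mul _
      ((wfun_meas a).mul ((wfun_meas b).comp (measurable_const.sub measurable_id)))
  rw [h3] at hmap
  have hinv : ENNReal.ofReal |s| * ENNReal.ofReal |s⁻¹| = 1 := by
    rw [← ENNReal.ofReal_mul (abs_nonneg s), abs_inv, mul_inv_cancel₀ (ne_of_gt habs)]
    simp
  have := congrArg (fun x => ENNReal.ofReal |s| * x) hmap
  simp only [← mul_assoc, hinv, one_mul] at this
  rw [← this, ← ENNReal.ofReal_mul (abs_nonneg s),
    ← ENNReal.ofReal_mul (by positivity : (0:ℝ) ≤ |s| * |s| ^ (-a))]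
  congr 2
  rw [show (1:ℝ) - a - b = 1 + (-a) + (-b) by ring, Real.rpow_add habs, Real.rpow_add habs,
    Real.rpow_one]

lemma ae_ne_zero : ∀ᵐ z : ℝ ∂(volume : Measure ℝ), z ≠ 0 := by
  have h : (volume : Measure ℝ) {(0:ℝ)} = 0 := measure_singleton 0
  rw [ae_iff]
  simpa using h

lemma key (d : ℝ) (hd2 : d < 1/2) :
    ∀ n : ℕ, 1 ≤ n → ((n:ℝ) - 1) / (2 * n) < d →
    ∃ C : ℝ≥0∞, C ≠ ⊤ ∧ ∀ g : ℝ → ℝ≥0∞, Measurable g →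
      ∫⁻ u : Fin n → ℝ, (∏ i, wfun (2 * d) (u i)) * g (∑ i, u i)
        ≤ C * ∫⁻ s : ℝ, wfun (2 * (n:ℝ) * d - ((n:ℝ) - 1)) s * g s := by
  intro n hn
  induction n, hn using Nat.le_induction with
  | base =>
    intro _
    refine ⟨1, ENNReal.one_ne_top, fun g hg => ?_⟩
    rw [one_mul]
    apply le_of_eq
    have hcomp := (volume_preserving_funUnique (Fin 1) ℝ).lintegral_comp
      (f := fun x : ℝ => wfun (2 * d) x * g x) ((wfun_meas _).mul hg)
    calc ∫⁻ u : Fin 1 → ℝ, (∏ i, wfun (2 * d) (u i)) * g (∑ i, u i)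
        = ∫⁻ u : Fin 1 → ℝ, wfun (2 * d) (u 0) * g (u 0) := by
          apply lintegral_congr; intro u; rw [Fin.prod_univ_one, Fin.sum_univ_one]
      _ = ∫⁻ x : ℝ, wfun (2 * d) x * g x := by
          rw [← hcomp]; apply lintegral_congr; intro u; rfl
      _ = ∫⁻ x : ℝ, wfun (2 * ((1:ℕ):ℝ) * d - (((1:ℕ):ℝ) - 1)) x * g x := by norm_num
  | succ n hn ih =>
    intro hdn1
    have hn0 : (0:ℝ) < n := by exact_mod_cast hn
    have hdn1' : (n:ℝ) / (2 * ((n:ℝ) + 1)) < d := by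
      have : ((n+1:ℕ):ℝ) - 1 = (n:ℝ) := by push_cast; ring
      have h2 : (2:ℝ) * ((n+1:ℕ):ℝ) = 2 * ((n:ℝ) + 1) := by push_cast; ring
      rw [this, h2] at hdn1
      exact hdn1
    have hdpos : 0 < d := lt_of_le_of_lt (by positivity) hdn1'
    have hdn : ((n:ℝ) - 1) / (2 * n) < d := by
      refine lt_of_le_of_lt ?_ hdn1'
      rw [div_le_div_iff₀ (by positivity) (by positivity)]
      nlinarith
    obtain ⟨C, hC, hCle⟩ := ih hdn
    set en : ℝ := 2 * (n:ℝ) * d - ((n:ℝ) - 1) with hen_def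
    have hen0 : 0 < en := by
      have := (div_lt_iff₀ (by positivity : (0:ℝ) < 2 * n)).1 hdn
      simp only [hen_def]; nlinarith
    have hen1 : en < 1 := by simp only [hen_def]; nlinarith
    have ha0 : 0 < 2 * d := by linarith
    have ha1 : 2 * d < 1 := by linarith
    have hsum : 1 < 2 * d + en := by
      have := (div_lt_iff₀ (by positivity : (0:ℝ) < 2 * ((n:ℝ) + 1))).1 hdn1'
      simp only [hen_def]; nlinarith
    have hIfin : ∫⁻ v : ℝ, wfun (2 * d) v * wfun en (1 - v) < ⊤ :=
      conv_finite (2 * d) en ha0 ha1 hen0 hen1 hsum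
    set I : ℝ≥0∞ := ∫⁻ v : ℝ, wfun (2 * d) v * wfun en (1 - v) with hI_def
    refine ⟨C * I, ENNReal.mul_ne_top hC hIfin.ne, fun g hg => ?_⟩
    set en1 : ℝ := 2 * ((n+1:ℕ):ℝ) * d - (((n+1:ℕ):ℝ) - 1) with hen1_def
    have hexp : ∀ z : ℝ, z ≠ 0 →
        ENNReal.ofReal (|z| ^ (1 - 2 * d - en)) = wfun en1 z := by
      intro z hz
      rw [wfun]
      congr 1
      push_cast [hen1_def, hen_def]
      ring_nf
    have hFmeas : Measurable fun u : Fin (n+1) → ℝ =>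
        (∏ i, wfun (2 * d) (u i)) * g (∑ i, u i) :=
      (Finset.measurable_prod _ fun i _ => (wfun_meas _).comp (measurable_pi_apply i)).mul
        (hg.comp (Finset.measurable_sum _ fun i _ => measurable_pi_apply i))
    have hMP := (measurePreserving_piFinSuccAbove
      (fun _ : Fin (n+1) => (volume : Measure ℝ)) 0).symm
    have hstep1 : ∫⁻ u : Fin (n+1) → ℝ, (∏ i, wfun (2 * d) (u i)) * g (∑ i, u i)
        = ∫⁻ x : ℝ, ∫⁻ y : Fin n → ℝ,
            wfun (2 * d) x * ((∏ i, wfun (2 * d) (y i)) * g (x + ∑ i, y i)) := by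
      have hcomp := hMP.lintegral_comp hFmeas
      calc ∫⁻ u : Fin (n+1) → ℝ, (∏ i, wfun (2 * d) (u i)) * g (∑ i, u i)
          = ∫⁻ u : Fin (n+1) → ℝ, (∏ i, wfun (2 * d) (u i)) * g (∑ i, u i)
              ∂(Measure.pi fun _ : Fin (n+1) => (volume : Measure ℝ)) := by rw [← volume_pi]
        _ = ∫⁻ p : ℝ × (Fin n → ℝ),
              (fun u : Fin (n+1) → ℝ => (∏ i, wfun (2 * d) (u i)) * g (∑ i, u i))
                ((MeasurableEquiv.piFinSuccAbove (fun _ : Fin (n+1) => ℝ) 0).symm p)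
              ∂((volume : Measure ℝ).prod (Measure.pi fun _ : Fin n => (volume : Measure ℝ))) :=
            hcomp.symm
        _ = ∫⁻ p : ℝ × (Fin n → ℝ),
              (fun u : Fin (n+1) → ℝ => (∏ i, wfun (2 * d) (u i)) * g (∑ i, u i))
                ((MeasurableEquiv.piFinSuccAbove (fun _ : Fin (n+1) => ℝ) 0).symm p)
              ∂((volume : Measure ℝ).prod (volume : Measure (Fin n → ℝ))) := by
            rw [← volume_pi]
        _ = ∫⁻ x : ℝ, ∫⁻ y : Fin n → ℝ,
              (fun u : Fin (n+1) → ℝ => (∏ i, wfun (2 * d) (u i)) * g (∑ i, u i))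
                ((MeasurableEquiv.piFinSuccAbove (fun _ : Fin (n+1) => ℝ) 0).symm (x, y)) := by
            have hPm : Measurable fun p : ℝ × (Fin n → ℝ) =>
                (fun u : Fin (n+1) → ℝ => (∏ i, wfun (2 * d) (u i)) * g (∑ i, u i))
                  ((MeasurableEquiv.piFinSuccAbove (fun _ : Fin (n+1) => ℝ) 0).symm p) :=
              hFmeas.comp (MeasurableEquiv.measurable _)
            rw [lintegral_prod _ hPm.aemeasurable]
        _ = _ := ?_
      apply lintegral_congr; intro x
      apply lintegral_congr; intro y
      simp only [MeasurableEquiv.piFinSuccAbove_symm_apply, Fin.insertNthEquiv,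
        Equiv.coe_fn_mk, Fin.insertNth_zero]
      simp only [Fin.cons_zero, Fin.cons_succ, cast_eq]
      rw [Fin.prod_univ_succ, Fin.sum_univ_succ]
      simp only [Fin.cons_zero, Fin.cons_succ]
      ring
    rw [hstep1]
    have hinner : ∀ x : ℝ,
        (∫⁻ y : Fin n → ℝ, (∏ i, wfun (2 * d) (y i)) * g (x + ∑ i, y i))
          ≤ C * ∫⁻ z : ℝ, wfun en (z - x) * g z := by
      intro x
      have hgx : Measurable fun s : ℝ => g (x + s) := hg.comp (measurable_id.const_add x)
      have h1 := hCle (fun s => g (x + s)) hgx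
      refine h1.trans (le_of_eq ?_)
      congr 1
      have := lintegral_add_left_eq_self (μ := (volume : Measure ℝ)) (fun z : ℝ => wfun en (z - x) * g z) x
      rw [← this]
      apply lintegral_congr; intro s
      simp [add_sub_cancel_left]
    calc ∫⁻ x : ℝ, ∫⁻ y : Fin n → ℝ,
            wfun (2 * d) x * ((∏ i, wfun (2 * d) (y i)) * g (x + ∑ i, y i))
        = ∫⁻ x : ℝ, wfun (2 * d) x
            * ∫⁻ y : Fin n → ℝ, (∏ i, wfun (2 * d) (y i)) * g (x + ∑ i, y i) := by
          apply lintegral_congr; intro x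
          exact lintegral_const_mul _
            ((Finset.measurable_prod _ fun i _ => (wfun_meas _).comp (measurable_pi_apply i)).mul
              (hg.comp ((Finset.measurable_sum _ fun i _ => measurable_pi_apply i).const_add x)))
      _ ≤ ∫⁻ x : ℝ, wfun (2 * d) x * (C * ∫⁻ z : ℝ, wfun en (z - x) * g z) := by
          apply lintegral_mono; intro x
          exact mul_le_mul_right (hinner x) _
      _ = C * ∫⁻ x : ℝ, ∫⁻ z : ℝ, wfun (2 * d) x * (wfun en (z - x) * g z) := by
          have hmz : ∀ x : ℝ, Measurable fun z : ℝ => wfun en (z - x) * g z := fun x =>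
            ((wfun_meas en).comp (measurable_id.sub_const x)).mul hg
          have hmx : Measurable fun x : ℝ => wfun (2 * d) x
              * ∫⁻ z : ℝ, wfun en (z - x) * g z := by
            apply (wfun_meas _).mul
            apply Measurable.lintegral_prod_right (f := fun x z : ℝ => wfun en (z - x) * g z)
            exact (((wfun_meas en).comp (measurable_snd.sub measurable_fst))).mul
              (hg.comp measurable_snd)
          calc ∫⁻ x : ℝ, wfun (2 * d) x * (C * ∫⁻ z : ℝ, wfun en (z - x) * g z)
              = ∫⁻ x : ℝ, C * (wfun (2 * d) x * ∫⁻ z : ℝ, wfun en (z - x) * g z) := by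
                apply lintegral_congr; intro x; ring
            _ = C * ∫⁻ x : ℝ, wfun (2 * d) x * ∫⁻ z : ℝ, wfun en (z - x) * g z :=
                lintegral_const_mul C hmx
            _ = C * ∫⁻ x : ℝ, ∫⁻ z : ℝ, wfun (2 * d) x * (wfun en (z - x) * g z) := by
                congr 1
                apply lintegral_congr; intro x
                exact (lintegral_const_mul _ (hmz x)).symm
      _ = C * ∫⁻ z : ℝ, ∫⁻ x : ℝ, wfun (2 * d) x * (wfun en (z - x) * g z) := by
          congr 1
          exact lintegral_lintegral_swap (((wfun_meas _).comp measurable_fst).mul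
            ((((wfun_meas en).comp (measurable_snd.sub measurable_fst))).mul
              (hg.comp measurable_snd))).aemeasurable
      _ = C * ∫⁻ z : ℝ, I * (wfun en1 z * g z) := by
          congr 1
          apply lintegral_congr_ae
          filter_upwards [ae_ne_zero] with z hz
          have h1 : ∫⁻ x : ℝ, wfun (2 * d) x * (wfun en (z - x) * g z)
              = (∫⁻ x : ℝ, wfun (2 * d) x * wfun en (z - x)) * g z := by
            have hconv_meas : Measurable fun x : ℝ => wfun (2 * d) x * wfun en (z - x) :=
              (wfun_meas _).mul ((wfun_meas en).comp (measurable_const.sub measurable_id))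
            rw [← lintegral_mul_const _ hconv_meas]
            apply lintegral_congr; intro x; ring
          rw [h1, conv_eval (2 * d) en z hz, hexp z hz, hI_def]
          ring
      _ = (C * I) * ∫⁻ z : ℝ, wfun en1 z * g z := by
          rw [lintegral_const_mul I (f := fun z => wfun en1 z * g z) ((wfun_meas en1).mul hg), ← mul_assoc]

lemma knorm (s t : ℝ) :
    ‖Complex.exp (Complex.I * (s:ℂ) * (t:ℂ)) - 1‖ ^ 2 = 2 - 2 * Real.cos (s * t) := by
  have h1 : Complex.I * (s:ℂ) * (t:ℂ) = ((s * t : ℝ) : ℂ) * Complex.I := by push_cast; ring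
  rw [h1, Complex.exp_mul_I]
  have h2 : Complex.cos ((s * t : ℝ) : ℂ) + Complex.sin ((s * t : ℝ) : ℂ) * Complex.I - 1
      = ((Real.cos (s * t) - 1 : ℝ) : ℂ) + ((Real.sin (s * t) : ℝ) : ℂ) * Complex.I := by
    rw [← Complex.ofReal_cos, ← Complex.ofReal_sin]; push_cast; ring
  rw [h2, Complex.sq_norm, Complex.normSq_add_mul_I]
  nlinarith [Real.sin_sq_add_cos_sq (s * t)]

lemma gker_le_t2 (t s : ℝ) :
    ENNReal.ofReal (‖Complex.exp (Complex.I * (s:ℂ) * (t:ℂ)) - 1‖ ^ 2 / |s| ^ 2)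
      ≤ ENNReal.ofReal (t ^ 2) := by
  apply ENNReal.ofReal_le_ofReal
  rcases eq_or_ne s 0 with rfl | hs
  · simp [abs_zero]
    positivity
  · rw [div_le_iff₀ (by positivity : (0:ℝ) < |s| ^ 2), knorm, sq_abs]
    nlinarith [Real.one_sub_sq_div_two_le_cos (x := s * t)]

lemma gker_le_four (t s : ℝ) :
    ENNReal.ofReal (‖Complex.exp (Complex.I * (s:ℂ) * (t:ℂ)) - 1‖ ^ 2 / |s| ^ 2)
      ≤ ENNReal.ofReal (4 / s ^ 2) := by
  apply ENNReal.ofReal_le_ofReal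
  rcases eq_or_ne s 0 with rfl | hs
  · simp
  · rw [sq_abs, knorm]
    apply div_le_div_of_nonneg_right ?_ (by positivity)
    · nlinarith [Real.neg_one_le_cos (s * t)]

lemma gker_meas (t : ℝ) : Measurable fun s : ℝ =>
    ENNReal.ofReal (‖Complex.exp (Complex.I * (s:ℂ) * (t:ℂ)) - 1‖ ^ 2 / |s| ^ 2) := by
  have hnum : Continuous fun s : ℝ => ‖Complex.exp (Complex.I * (s:ℂ) * (t:ℂ)) - 1‖ ^ 2 := by
    apply Continuous.pow
    apply Continuous.norm
    apply Continuous.sub _ continuous_const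
    exact Complex.continuous_exp.comp
      ((continuous_const.mul Complex.continuous_ofReal).mul continuous_const)
  have hden : Continuous fun s : ℝ => |s| ^ 2 := (continuous_abs.pow 2)
  exact (hnum.measurable.div hden.measurable).ennreal_ofReal

theorem stmt17 (k : ℕ) (hk : 2 ≤ k) (d : ℝ)
    (hd : (1 / 2 : ℝ) * (1 - 1 / (k : ℝ)) < d) (hd' : d < 1 / 2) (t : ℝ) (ht : 0 < t) :
    ∫⁻ u : Fin k → ℝ,
      ENNReal.ofReal
        (‖Complex.exp (Complex.I * (∑ i, u i : ℝ) * t) - 1‖ ^ 2 / |∑ i, u i| ^ 2 *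
          ∏ i, |u i| ^ (-(2 * d))) < ⊤ := by
  have hk0 : (0:ℝ) < (k:ℝ) := by
    have : 0 < k := by omega
    exact_mod_cast this
  have hdk : ((k:ℝ) - 1) / (2 * (k:ℝ)) < d := by
    have heq : (1/2 : ℝ) * (1 - 1/(k:ℝ)) = ((k:ℝ) - 1) / (2 * (k:ℝ)) := by
      field_simp
    rw [heq] at hd; exact hd
  obtain ⟨C, hC, hCle⟩ := key d hd' k (by omega) hdk
  set g : ℝ → ℝ≥0∞ := fun s =>
    ENNReal.ofReal (‖Complex.exp (Complex.I * (s:ℂ) * (t:ℂ)) - 1‖ ^ 2 / |s| ^ 2) with hg_def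
  have hg : Measurable g := gker_meas t
  have heq : ∀ u : Fin k → ℝ,
      ENNReal.ofReal
        (‖Complex.exp (Complex.I * (∑ i, u i : ℝ) * t) - 1‖ ^ 2 / |∑ i, u i| ^ 2 *
          ∏ i, |u i| ^ (-(2 * d)))
      = (∏ i, wfun (2 * d) (u i)) * g (∑ i, u i) := by
    intro u
    rw [ENNReal.ofReal_mul (by positivity),
      ENNReal.ofReal_prod_of_nonneg (fun i _ => Real.rpow_nonneg (abs_nonneg _) _),
      mul_comm]
    rfl
  rw [lintegral_congr heq]
  refine lt_of_le_of_lt (hCle g hg) ?_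
  refine ENNReal.mul_lt_top hC.lt_top ?_
  set ek : ℝ := 2 * (k:ℝ) * d - ((k:ℝ) - 1) with hek_def
  have hek0 : 0 < ek := by
    have := (div_lt_iff₀ (by positivity : (0:ℝ) < 2 * (k:ℝ))).1 hdk
    simp only [hek_def]; nlinarith
  have hek1 : ek < 1 := by simp only [hek_def]; nlinarith
  have hmeasS : MeasurableSet {s : ℝ | |s| ≤ 1} := measurable_abs measurableSet_Iic
  rw [← lintegral_add_compl _ hmeasS]
  refine ENNReal.add_lt_top.2 ⟨?_, ?_⟩
  · refine lt_of_le_of_lt (setLIntegral_mono_ae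
      ((wfun_meas ek).mul_const _).aemeasurable
      (ae_of_all _ fun s _ => mul_le_mul_right (gker_le_t2 t s) (wfun ek s))) ?_
    rw [lintegral_mul_const _ (wfun_meas ek)]
    exact ENNReal.mul_lt_top (lint_ball ek 1 hek1 one_pos) ENNReal.ofReal_lt_top
  · have hsub : {s : ℝ | |s| ≤ 1}ᶜ ⊆ {s : ℝ | 1 ≤ |s|} := by
      intro s hs
      simp only [mem_compl_iff, mem_setOf_eq] at hs
      exact le_of_lt (not_le.1 hs)
    refine lt_of_le_of_lt (lintegral_mono_set hsub) ?_
    have hpt : ∀ s : ℝ, s ∈ {s : ℝ | 1 ≤ |s|} →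
        wfun ek s * g s ≤ ENNReal.ofReal 4 * wfun (ek + 2) s := by
      intro s hs
      have hs1 : (1:ℝ) ≤ |s| := hs
      have hs0 : (0:ℝ) < |s| := lt_of_lt_of_le one_pos hs1
      refine le_trans (mul_le_mul_right (gker_le_four t s) (wfun ek s)) (le_of_eq ?_)
      rw [wfun, wfun, ← ENNReal.ofReal_mul (Real.rpow_nonneg (abs_nonneg s) _),
        ← ENNReal.ofReal_mul (by norm_num : (0:ℝ) ≤ 4)]
      congr 1
      have h2 : |s| ^ (-(2:ℝ)) = (s ^ 2)⁻¹ := by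
        rw [Real.rpow_neg (abs_nonneg s), show ((2:ℝ)) = ((2:ℕ):ℝ) by norm_num,
          Real.rpow_natCast, sq_abs]
      rw [show -(ek + 2) = -ek + -(2:ℝ) by ring, Real.rpow_add hs0, h2]
      field_simp
    refine lt_of_le_of_lt (setLIntegral_mono_ae
      ((wfun_meas (ek + 2)).const_mul _).aemeasurable (ae_of_all _ hpt)) ?_
    rw [lintegral_const_mul _ (wfun_meas (ek + 2))]
    exact ENNReal.mul_lt_top ENNReal.ofReal_lt_top
      (lint_tail (ek + 2) 1 (by linarith) one_pos)
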